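/- Let m ≥ 1 and 0 ≤ i ≤ i₀ ≤ m be integers, and let T_m be the m-th Tchebyshev polynomial. Then there is a constant C = C(m) such that for all z < −1, |∫_{−1}^1 (σ−z)^{i−1/2} T_m(σ)(1−σ²)^{−1/2} dσ| ≤ C (−1−z)^{i−i₀−1/2}. -/

import Mathlib

open MeasureTheory

open Set


noncomputable def auxP (m : ℕ) : ℕ → Polynomial ℝ
  | 0 => 1
  | (k+1) => Polynomial.C (-2 * ((m : ℝ) - 1/2 - k)) * Polynomial.X * auxP m k
      + (1 - Polynomial.X ^ 2) * Polynomial.derivative (auxP m k)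

noncomputable def auxF (m k : ℕ) (σ : ℝ) : ℝ :=
  (1 - σ ^ 2) ^ ((m : ℝ) - 1/2 - k) * (auxP m k).eval σ

lemma auxP_succ (m k : ℕ) : auxP m (k+1) =
    Polynomial.C (-2 * ((m : ℝ) - 1/2 - k)) * Polynomial.X * auxP m k
      + (1 - Polynomial.X ^ 2) * Polynomial.derivative (auxP m k) := rfl

lemma auxF_hasDerivAt (m k : ℕ) {σ : ℝ} (hσ : σ ∈ Set.Ioo (-1:ℝ) 1) :
    HasDerivAt (auxF m k) (auxF m (k+1) σ) σ := by
  have h1 : 0 < 1 - σ ^ 2 := by nlinarith [hσ.1, hσ.2]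
  set a : ℝ := (m : ℝ) - 1/2 - k with ha
  have hbase : HasDerivAt (fun σ : ℝ => 1 - σ ^ 2) (-(2 * σ)) σ := by
    simpa using ((hasDerivAt_pow 2 σ).const_sub 1)
  have hrpow : HasDerivAt (fun σ : ℝ => (1 - σ ^ 2) ^ a)
      (-(2 * σ) * a * (1 - σ ^ 2) ^ (a - 1)) σ :=
    hbase.rpow_const (Or.inl h1.ne')
  have hp : HasDerivAt (fun σ : ℝ => (auxP m k).eval σ)
      ((Polynomial.derivative (auxP m k)).eval σ) σ := (auxP m k).hasDerivAt σ
  have H := hrpow.mul hp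
  have hx : (1 - σ ^ 2 : ℝ) ^ a = (1 - σ ^ 2) ^ (a - 1) * (1 - σ ^ 2) := by
    rw [← Real.rpow_add_one h1.ne']; ring_nf
  convert H using 1
  show auxF m (k+1) σ = _
  have hcast : ((m : ℝ) - 1/2 - ((k : ℕ) + 1 : ℕ)) = a - 1 := by push_cast [ha]; ring
  simp only [auxF, auxP_succ, hcast, Polynomial.eval_add, Polynomial.eval_mul, Polynomial.eval_C,
    Polynomial.eval_X, Polynomial.eval_sub, Polynomial.eval_one, Polynomial.eval_pow]
  rw [hx]; ring
  all_goals rfl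

lemma iteratedDeriv_eq_auxF (m k : ℕ) :
    ∀ σ ∈ Set.Ioo (-1:ℝ) 1,
      iteratedDeriv k (fun y : ℝ => (1 - y ^ 2) ^ ((m : ℝ) - 1 / 2)) σ = auxF m k σ := by
  induction k with
  | zero =>
    intro σ _
    simp [auxF, auxP]
  | succ k ih =>
    intro σ hσ
    rw [iteratedDeriv_succ]
    have heq : iteratedDeriv k (fun y : ℝ => (1 - y ^ 2) ^ ((m : ℝ) - 1 / 2))
        =ᶠ[nhds σ] auxF m k :=
      Filter.eventuallyEq_of_mem (isOpen_Ioo.mem_nhds hσ) ih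
    rw [heq.deriv_eq, (auxF_hasDerivAt m k hσ).deriv]

lemma rpow_nat_add_half (x : ℝ) (hx : 0 ≤ x) (n : ℕ) :
    x ^ ((n : ℝ) + 1/2) = x ^ n * Real.sqrt x := by
  rcases eq_or_lt_of_le hx with h | h
  · rw [← h]
    rw [Real.zero_rpow (by positivity), Real.sqrt_zero, mul_zero]
  · rw [Real.rpow_add h, Real.rpow_natCast, Real.sqrt_eq_rpow]

-- integrability of (1-x^2)^(-1/2) on Ioo (-1) 1
lemma integrableOn_base :
    IntegrableOn (fun σ : ℝ => (1 - σ ^ 2) ^ (-(1/2) : ℝ)) (Set.Ioo (-1:ℝ) 1) := by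
  have hr : (-1 : ℝ) < -(1/2) := by norm_num
  have h0 : IntervalIntegrable (fun x : ℝ => x ^ (-(1/2) : ℝ)) volume 0 1 :=
    intervalIntegral.intervalIntegrable_rpow' hr
  -- right half : dominated by (1-x)^(-1/2)
  have hg1 : IntervalIntegrable (fun x : ℝ => (1 - x) ^ (-(1/2) : ℝ)) volume 0 1 := by
    simpa using (h0.comp_sub_left 1).symm
  have hg1' : IntegrableOn (fun x : ℝ => (1 - x) ^ (-(1/2) : ℝ)) (Set.Ioo (0:ℝ) 1) :=
    (intervalIntegrable_iff_integrableOn_Ioo_of_le (by norm_num)).mp hg1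
  have hright : IntegrableOn (fun σ : ℝ => (1 - σ ^ 2) ^ (-(1/2) : ℝ)) (Set.Ioo (0:ℝ) 1) := by
    apply Integrable.mono hg1'
    · apply ContinuousOn.aestronglyMeasurable _ measurableSet_Ioo
      apply ContinuousOn.rpow_const (by fun_prop)
      intro x hx
      exact Or.inl (by nlinarith [hx.1, hx.2])
    · rw [ae_restrict_iff' measurableSet_Ioo]
      filter_upwards with x hx
      have h1 : 0 < 1 - x ^ 2 := by nlinarith [hx.1, hx.2]
      have h2 : 0 < 1 - x := by nlinarith [hx.2]
      rw [Real.norm_eq_abs, Real.norm_eq_abs, abs_of_nonneg (Real.rpow_nonneg h1.le _),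
        abs_of_nonneg (Real.rpow_nonneg h2.le _)]
      exact Real.rpow_le_rpow_of_nonpos h2 (by nlinarith [hx.1]) (by norm_num)
  -- left half
  have hg2 : IntervalIntegrable (fun x : ℝ => (1 + x) ^ (-(1/2) : ℝ)) volume (-1) 0 := by
    have := h0.comp_add_right 1
    norm_num at this
    convert this using 2 with x
    ring_nf
  have hg2' : IntegrableOn (fun x : ℝ => (1 + x) ^ (-(1/2) : ℝ)) (Set.Ioc (-1:ℝ) 0) :=
    (intervalIntegrable_iff_integrableOn_Ioc_of_le (by norm_num)).mp hg2
  have hleft : IntegrableOn (fun σ : ℝ => (1 - σ ^ 2) ^ (-(1/2) : ℝ)) (Set.Ioc (-1:ℝ) 0) := by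
    apply Integrable.mono hg2'
    · apply ContinuousOn.aestronglyMeasurable _ measurableSet_Ioc
      apply ContinuousOn.rpow_const (by fun_prop)
      intro x hx
      exact Or.inl (by nlinarith [hx.1, hx.2])
    · rw [ae_restrict_iff' measurableSet_Ioc]
      filter_upwards with x hx
      have h1 : 0 < 1 - x ^ 2 := by nlinarith [hx.1, hx.2]
      have h2 : 0 < 1 + x := by nlinarith [hx.1]
      rw [Real.norm_eq_abs, Real.norm_eq_abs, abs_of_nonneg (Real.rpow_nonneg h1.le _),
        abs_of_nonneg (Real.rpow_nonneg h2.le _)]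
      exact Real.rpow_le_rpow_of_nonpos h2 (by nlinarith [hx.2]) (by norm_num)
  have hunion := hleft.union hright
  apply hunion.mono_set
  intro x hx
  rcases le_or_gt x 0 with h | h
  · exact Or.inl ⟨hx.1, h⟩
  · exact Or.inr ⟨h, hx.2⟩

lemma one_sub_sq_nonneg_of_Icc {σ : ℝ} (hσ : σ ∈ Set.Icc (-1:ℝ) 1) : 0 ≤ 1 - σ ^ 2 := by
  nlinarith [hσ.1, hσ.2]

lemma auxF_eq_cont (m k : ℕ) (hk : k < m) {σ : ℝ} (hσ : σ ∈ Set.Icc (-1:ℝ) 1) :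
    auxF m k σ = (1 - σ ^ 2) ^ (m - k - 1) * Real.sqrt (1 - σ ^ 2) * (auxP m k).eval σ := by
  have hx : 0 ≤ 1 - σ ^ 2 := one_sub_sq_nonneg_of_Icc hσ
  have hcast : ((m : ℝ) - 1/2 - k) = ((m - k - 1 : ℕ) : ℝ) + 1/2 := by
    have : ((m - k - 1 : ℕ) : ℝ) = (m : ℝ) - k - 1 := by
      have h1 : k + 1 ≤ m := hk
      push_cast [Nat.sub_sub, Nat.cast_sub h1]
      ring
    rw [this]; ring
  rw [auxF, hcast, rpow_nat_add_half _ hx]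

lemma continuous_cont (m k : ℕ) :
    Continuous (fun σ : ℝ => (1 - σ ^ 2) ^ (m - k - 1) * Real.sqrt (1 - σ ^ 2)
      * (auxP m k).eval σ) := by
  fun_prop

lemma auxF_continuousOn (m k : ℕ) (hk : k < m) :
    ContinuousOn (auxF m k) (Set.Icc (-1:ℝ) 1) :=
  ((continuous_cont m k).continuousOn).congr fun σ hσ => auxF_eq_cont m k hk hσ

lemma integrableOn_mul_auxF (m k : ℕ) (hk : k ≤ m) (u : ℝ → ℝ)
    (hu : ContinuousOn u (Set.Icc (-1:ℝ) 1)) :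
    IntegrableOn (fun σ => u σ * auxF m k σ) (Set.Ioo (-1:ℝ) 1) := by
  have hcont : ContinuousOn (fun σ : ℝ => u σ * ((1 - σ ^ 2) ^ (m - k) * (auxP m k).eval σ))
      (Set.Icc (-1:ℝ) 1) := by
    apply hu.mul (Continuous.continuousOn (by fun_prop))
  obtain ⟨B, hB⟩ := isCompact_Icc.exists_bound_of_continuousOn hcont
  apply Integrable.mono (integrableOn_base.const_mul B)
  · apply ContinuousOn.aestronglyMeasurable _ measurableSet_Ioo
    apply ContinuousOn.mul (hu.mono Ioo_subset_Icc_self)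
    apply ContinuousOn.mul _ (Continuous.continuousOn (by fun_prop))
    apply ContinuousOn.rpow_const (by fun_prop)
    intro x hx
    exact Or.inl (by nlinarith [hx.1, hx.2])
  · rw [ae_restrict_iff' measurableSet_Ioo]
    filter_upwards with σ hσ
    have h1 : 0 < 1 - σ ^ 2 := by nlinarith [hσ.1, hσ.2]
    have hsplit : (1 - σ ^ 2 : ℝ) ^ ((m : ℝ) - 1/2 - k)
        = (1 - σ ^ 2) ^ (m - k) * (1 - σ ^ 2) ^ (-(1/2) : ℝ) := by
      rw [← Real.rpow_natCast _ (m - k), ← Real.rpow_add h1]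
      congr 1
      push_cast [Nat.cast_sub hk]
      ring
    have : u σ * auxF m k σ
        = (u σ * ((1 - σ ^ 2) ^ (m - k) * (auxP m k).eval σ)) * (1 - σ ^ 2) ^ (-(1/2) : ℝ) := by
      rw [auxF, hsplit]; ring
    rw [this]
    have hw : (0:ℝ) ≤ (1 - σ ^ 2) ^ (-(1/2) : ℝ) := Real.rpow_nonneg h1.le _
    have hBσ := hB σ (Ioo_subset_Icc_self hσ)
    calc ‖u σ * ((1 - σ ^ 2) ^ (m - k) * (auxP m k).eval σ) * (1 - σ ^ 2) ^ (-(1/2) : ℝ)‖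
        = ‖u σ * ((1 - σ ^ 2) ^ (m - k) * (auxP m k).eval σ)‖ * (1 - σ ^ 2) ^ (-(1/2) : ℝ) := by
          rw [norm_mul]
          congr 1
          rw [Real.norm_eq_abs, abs_of_nonneg hw]
      _ ≤ |B| * (1 - σ ^ 2) ^ (-(1/2) : ℝ) :=
          mul_le_mul_of_nonneg_right (hBσ.trans (le_abs_self B)) hw
      _ = ‖B * (1 - σ ^ 2) ^ (-(1/2) : ℝ)‖ := by
          rw [norm_mul, Real.norm_eq_abs, Real.norm_eq_abs, abs_of_nonneg hw]

lemma u_continuousOn (z : ℝ) (hz : z < -1) (c : ℝ) :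
    ContinuousOn (fun σ : ℝ => (σ - z) ^ c) (Set.Icc (-1:ℝ) 1) := by
  apply ContinuousOn.rpow_const (by fun_prop)
  intro x hx
  exact Or.inl (by nlinarith [hx.1])

lemma ibp_step (m : ℕ) (i : ℕ) (z : ℝ) (hz : z < -1) (j : ℕ) (hj : j < m) :
    ∫ σ in Set.Ioo (-1:ℝ) 1, (σ - z) ^ ((i:ℝ) - 1/2 - j) * auxF m (m - j) σ
      = ((j:ℝ) + 1/2 - i) *
        ∫ σ in Set.Ioo (-1:ℝ) 1, (σ - z) ^ ((i:ℝ) - 1/2 - (j+1:ℕ)) * auxF m (m - (j+1)) σ := by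
  set c : ℝ := (i:ℝ) - 1/2 - j with hc
  have hc1 : (i:ℝ) - 1/2 - (j+1:ℕ) = c - 1 := by push_cast [hc]; ring
  have hmj : m - (j+1) = m - j - 1 := by omega
  have hsucc : (m - j - 1) + 1 = m - j := by omega
  have hklt : m - j - 1 < m := by omega
  set G : ℝ → ℝ := fun σ => (σ - z) ^ c *
    ((1 - σ ^ 2) ^ (m - (m - j - 1) - 1) * Real.sqrt (1 - σ ^ 2)
      * (auxP m (m - j - 1)).eval σ) with hG
  set D : ℝ → ℝ := fun σ => c * (σ - z) ^ (c - 1) * auxF m (m - j - 1) σ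
      + (σ - z) ^ c * auxF m (m - j) σ with hD
  have hGcont : ContinuousOn G (Set.Icc (-1:ℝ) 1) :=
    (u_continuousOn z hz c).mul (Continuous.continuousOn (by fun_prop))
  have hGderiv : ∀ σ ∈ Set.Ioo (-1:ℝ) 1, HasDerivAt G (D σ) σ := by
    intro σ hσ
    have hσz : 0 < σ - z := by nlinarith [hσ.1]
    have hu : HasDerivAt (fun σ : ℝ => (σ - z) ^ c) (c * (σ - z) ^ (c - 1)) σ := by
      have h := ((hasDerivAt_id σ).sub_const z).rpow_const (p := c) (Or.inl hσz.ne')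
      simpa using h
    have hF := auxF_hasDerivAt m (m - j - 1) hσ
    rw [hsucc] at hF
    have hprod := hu.mul hF
    apply hprod.congr_of_eventuallyEq
    filter_upwards [isOpen_Ioo.mem_nhds hσ] with x hx
    rw [hG]
    simp only
    rw [← auxF_eq_cont m (m - j - 1) hklt (Ioo_subset_Icc_self hx)]
    rfl
  have hint1 : IntervalIntegrable (fun σ => c * (σ - z) ^ (c - 1) * auxF m (m - j - 1) σ)
      volume (-1) 1 := by
    apply ContinuousOn.intervalIntegrable
    rw [uIcc_of_le (by norm_num)]
    exact ((continuousOn_const.mul (u_continuousOn z hz (c-1))).mul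
      (auxF_continuousOn m (m - j - 1) hklt))
  have hint2 : IntervalIntegrable (fun σ => (σ - z) ^ c * auxF m (m - j) σ) volume (-1) 1 := by
    rw [intervalIntegrable_iff_integrableOn_Ioo_of_le (by norm_num)]
    exact integrableOn_mul_auxF m (m - j) (by omega) _ (u_continuousOn z hz c)
  have hintD : IntervalIntegrable D volume (-1) 1 := hint1.add hint2
  have hFTC := intervalIntegral.integral_eq_sub_of_hasDerivAt_of_le (by norm_num : (-1:ℝ) ≤ 1)
    hGcont hGderiv hintD
  have hG1 : G 1 = 0 := by simp [hG]
  have hGm1 : G (-1) = 0 := by norm_num [hG]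
  rw [hG1, hGm1, sub_zero] at hFTC
  have hsplit : ∫ σ in (-1:ℝ)..1, D σ
      = (∫ σ in (-1:ℝ)..1, c * (σ - z) ^ (c - 1) * auxF m (m - j - 1) σ)
        + ∫ σ in (-1:ℝ)..1, (σ - z) ^ c * auxF m (m - j) σ :=
    intervalIntegral.integral_add hint1 hint2
  rw [hsplit] at hFTC
  have hIoo : ∀ f : ℝ → ℝ, ∫ σ in (-1:ℝ)..1, f σ = ∫ σ in Set.Ioo (-1:ℝ) 1, f σ := by
    intro f
    rw [intervalIntegral.integral_of_le (by norm_num), MeasureTheory.integral_Ioc_eq_integral_Ioo]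
  rw [hIoo, hIoo] at hFTC
  have hpull : ∫ σ in Set.Ioo (-1:ℝ) 1, c * (σ - z) ^ (c - 1) * auxF m (m - j - 1) σ
      = c * ∫ σ in Set.Ioo (-1:ℝ) 1, (σ - z) ^ (c - 1) * auxF m (m - j - 1) σ := by
    rw [← MeasureTheory.integral_const_mul]
    congr 1; ext σ; ring
  rw [hpull] at hFTC
  rw [hc1, hmj]
  have hneg : ((j:ℝ) + 1/2 - i) = -c := by rw [hc]; ring
  rw [hneg, neg_mul]
  linarith [hFTC]

lemma ibp_chain (m : ℕ) (i : ℕ) (z : ℝ) (hz : z < -1) (n : ℕ) (hn : n ≤ m) :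
    ∫ σ in Set.Ioo (-1:ℝ) 1, (σ - z) ^ ((i:ℝ) - 1/2) * auxF m m σ
      = (∏ t ∈ Finset.range n, ((t:ℝ) + 1/2 - i)) *
        ∫ σ in Set.Ioo (-1:ℝ) 1, (σ - z) ^ ((i:ℝ) - 1/2 - (n:ℕ)) * auxF m (m - n) σ := by
  induction n with
  | zero => simp
  | succ n ih =>
    rw [ih (by omega), ibp_step m i z hz n (by omega), Finset.prod_range_succ]
    ring

/-- For 0 ≤ i ≤ i₀ ≤ m and z < −1,
|∫_{−1}^1 (σ−z)^{i−1/2} T_m(σ)(1−σ²)^{−1/2} dσ| ≤ C(m) (−1−z)^{i−i₀−1/2}. -/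
theorem stmt_16 (m : ℕ) (hm : 1 ≤ m) (i i₀ : ℕ) (hi : i ≤ i₀) (hi₀ : i₀ ≤ m)
    (T : ℝ → ℝ)
    (hT : ∀ x : ℝ, T x = ((-1 : ℝ) ^ m / (Nat.doubleFactorial (2 * m - 1) : ℝ)) *
      Real.sqrt (1 - x ^ 2) *
      iteratedDeriv m (fun y : ℝ => (1 - y ^ 2) ^ ((m : ℝ) - 1 / 2)) x) :
    ∃ C : ℝ, 0 < C ∧ ∀ z : ℝ, z < -1 →
      |∫ σ in Set.Ioo (-1 : ℝ) 1,
          (σ - z) ^ ((i : ℝ) - 1 / 2) * T σ * (1 - σ ^ 2) ^ (-(1 / 2 : ℝ))| ≤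
        C * (-1 - z) ^ ((i : ℝ) - (i₀ : ℝ) - 1 / 2) := by
  set cm : ℝ := (-1 : ℝ) ^ m / (Nat.doubleFactorial (2 * m - 1) : ℝ) with hcm
  set Pr : ℝ := ∏ t ∈ Finset.range i₀, ((t:ℝ) + 1/2 - i) with hPr
  set C₂ : ℝ := ∫ σ in Set.Ioo (-1:ℝ) 1, |auxF m (m - i₀) σ| with hC₂
  have hC₂0 : 0 ≤ C₂ := MeasureTheory.integral_nonneg fun σ => abs_nonneg _
  have hFi : IntegrableOn (auxF m (m - i₀)) (Set.Ioo (-1:ℝ) 1) := by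
    have := integrableOn_mul_auxF m (m - i₀) (by omega) (fun _ => (1:ℝ)) continuousOn_const
    simpa using this
  refine ⟨|cm| * |Pr| * C₂ + 1, by positivity, fun z hz => ?_⟩
  set e : ℝ := (i:ℝ) - 1/2 - (i₀:ℕ) with he
  have hee : (i : ℝ) - (i₀ : ℝ) - 1/2 = e := by rw [he]; push_cast; ring
  have he0 : e ≤ 0 := by
    rw [he]
    have : (i:ℝ) ≤ (i₀:ℝ) := Nat.cast_le.mpr hi
    push_cast
    linarith
  have hz0 : 0 < -1 - z := by linarith
  -- step 1 : rewrite the integrand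
  have hcongr : Set.EqOn
      (fun σ : ℝ => (σ - z) ^ ((i : ℝ) - 1 / 2) * T σ * (1 - σ ^ 2) ^ (-(1 / 2 : ℝ)))
      (fun σ : ℝ => cm * ((σ - z) ^ ((i : ℝ) - 1/2) * auxF m m σ))
      (Set.Ioo (-1:ℝ) 1) := by
    intro σ hσ
    have h1 : 0 < 1 - σ ^ 2 := by nlinarith [hσ.1, hσ.2]
    have key : Real.sqrt (1 - σ ^ 2) * (1 - σ ^ 2) ^ (-(1 / 2 : ℝ)) = 1 := by
      rw [Real.sqrt_eq_rpow, ← Real.rpow_add h1]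
      norm_num
    simp only
    rw [hT σ, iteratedDeriv_eq_auxF m m σ hσ]
    linear_combination (cm * ((σ - z) ^ ((i:ℝ) - 1/2)) * auxF m m σ) * key
  rw [MeasureTheory.setIntegral_congr_fun measurableSet_Ioo hcongr,
    MeasureTheory.integral_const_mul, ibp_chain m i z hz i₀ hi₀, ← hPr]
  -- step 2 : bound the remaining integral
  have hbound : |∫ σ in Set.Ioo (-1:ℝ) 1, (σ - z) ^ e * auxF m (m - i₀) σ|
      ≤ (-1 - z) ^ e * C₂ := by
    have h1 : |∫ σ in Set.Ioo (-1:ℝ) 1, (σ - z) ^ e * auxF m (m - i₀) σ|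
        ≤ ∫ σ in Set.Ioo (-1:ℝ) 1, |(σ - z) ^ e * auxF m (m - i₀) σ| := by
      simpa only [Real.norm_eq_abs] using
        MeasureTheory.norm_integral_le_integral_norm
          (μ := volume.restrict (Set.Ioo (-1:ℝ) 1))
          (fun σ => (σ - z) ^ e * auxF m (m - i₀) σ)
    have h2 : ∫ σ in Set.Ioo (-1:ℝ) 1, |(σ - z) ^ e * auxF m (m - i₀) σ|
        ≤ ∫ σ in Set.Ioo (-1:ℝ) 1, (-1 - z) ^ e * |auxF m (m - i₀) σ| := by
      apply MeasureTheory.integral_mono_of_nonneg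
      · filter_upwards with σ using abs_nonneg _
      · exact (hFi.abs).const_mul _
      · rw [Filter.EventuallyLE, ae_restrict_iff' measurableSet_Ioo]
        filter_upwards with σ hσ
        have hσz : (0:ℝ) < -1 - z := hz0
        have hle : -1 - z ≤ σ - z := by nlinarith [hσ.1]
        have hrle : (σ - z) ^ e ≤ (-1 - z) ^ e :=
          Real.rpow_le_rpow_of_nonpos hσz hle he0
        rw [abs_mul, abs_of_nonneg (Real.rpow_nonneg (by linarith) e)]
        exact mul_le_mul_of_nonneg_right hrle (abs_nonneg _)
    calc |∫ σ in Set.Ioo (-1:ℝ) 1, (σ - z) ^ e * auxF m (m - i₀) σ|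
        ≤ ∫ σ in Set.Ioo (-1:ℝ) 1, (-1 - z) ^ e * |auxF m (m - i₀) σ| := h1.trans h2
      _ = (-1 - z) ^ e * C₂ := by rw [MeasureTheory.integral_const_mul, hC₂]
  rw [hee]
  calc |cm * (Pr * ∫ σ in Set.Ioo (-1:ℝ) 1, (σ - z) ^ e * auxF m (m - i₀) σ)|
      = |cm| * |Pr| * |∫ σ in Set.Ioo (-1:ℝ) 1, (σ - z) ^ e * auxF m (m - i₀) σ| := by
        rw [abs_mul, abs_mul, mul_assoc]
    _ ≤ |cm| * |Pr| * ((-1 - z) ^ e * C₂) :=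
        mul_le_mul_of_nonneg_left hbound (by positivity)
    _ = (|cm| * |Pr| * C₂) * (-1 - z) ^ e := by ring
    _ ≤ (|cm| * |Pr| * C₂ + 1) * (-1 - z) ^ e :=
        mul_le_mul_of_nonneg_right (by linarith) (Real.rpow_nonneg hz0.le e)
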